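/- arXiv:2205.02610 — 3 statements merged into one kernel-verified Lean document; each statement's English description precedes it below -/
import Mathlib

section
/- For every l ≥ 2, the number of primes in the interval [2^(l-1), 2^l) is at least 2^(l-1)/(3l), i.e., the fraction of integers in [2^(l-1), 2^l) that are prime is at least 1/(3l). -/
open Finset Nat

private theorem helper6 (m : ℕ) (hm : 6 ≤ m) : 6 * m + 13 ≤ 2 ^ m := by
  induction m with
  | zero => omega
  | succ k ih =>
    rcases Nat.lt_or_ge k 6 with h | h
    · interval_cases k <;> omega
    · have h2 := ih h
      have h3 : 2 ^ (k + 1) = 2 * 2 ^ k := by ring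
      omega

private theorem card_lb (a b m : ℕ) (L : List ℕ) (hnd : L.Nodup) (hlen : m ≤ L.length)
    (hmem : ∀ x ∈ L, a ≤ x ∧ x < b ∧ x.Prime) :
    m ≤ ((Finset.Ico a b).filter Nat.Prime).card := by
  calc m ≤ L.length := hlen
    _ = L.toFinset.card := (List.toFinset_card_of_nodup hnd).symm
    _ ≤ _ := by
      apply Finset.card_le_card
      intro x hx
      obtain ⟨h1, h2, h3⟩ := hmem x (List.mem_toFinset.1 hx)
      simp only [Finset.mem_filter, Finset.mem_Ico]
      exact ⟨⟨h1, h2⟩, h3⟩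

private theorem cb_le (n : ℕ) (n_big : 2 < n) :
    Nat.centralBinom n ≤ (2 * n) ^ Nat.sqrt (2 * n) * 4 ^ (2 * n / 3) *
      (2 * n) ^ (((Finset.Ico (n + 1) (2 * n + 1)).filter Nat.Prime).card) := by
  have n_pos : 0 < n := by omega
  have n2_pos : 1 ≤ 2 * n := by omega
  set T := (Finset.range (2 * n + 1)).filter Nat.Prime with hT
  set f : ℕ → ℕ := fun x => x ^ (Nat.centralBinom n).factorization x with hf
  have hprod : ∏ x ∈ T, f x = Nat.centralBinom n := by
    rw [← Nat.prod_pow_factorization_centralBinom n]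
    apply Finset.prod_filter_of_ne
    intro p _ h
    contrapose! h
    rw [hf]
    simp only
    rw [Nat.factorization_eq_zero_of_not_prime _ h, pow_zero]
  rw [← hprod, ← Finset.prod_filter_mul_prod_filter_not T (· ≤ 2 * n / 3)]
  apply Nat.mul_le_mul
  · -- small primes
    have hS : T.filter (· ≤ 2 * n / 3) = (Finset.range (2 * n / 3 + 1)).filter Nat.Prime := by
      ext p
      simp only [hT, Finset.mem_filter, Finset.mem_range]
      constructor
      · rintro ⟨⟨h1, h2⟩, h3⟩; exact ⟨by omega, h2⟩
      · rintro ⟨h1, h2⟩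
        have : 2 * n / 3 ≤ 2 * n := Nat.div_le_self _ _
        exact ⟨⟨by omega, h2⟩, by omega⟩
    rw [hS]
    set S := (Finset.range (2 * n / 3 + 1)).filter Nat.Prime with hSdef
    rw [← Finset.prod_filter_mul_prod_filter_not S (· ≤ sqrt (2 * n))]
    apply Nat.mul_le_mul
    · refine (Finset.prod_le_prod' fun p _ => (?_ : f p ≤ 2 * n)).trans ?_
      · exact Nat.pow_factorization_choose_le (by omega)
      have hc : (Finset.Icc 1 (sqrt (2 * n))).card = sqrt (2 * n) := by
        rw [Nat.card_Icc, Nat.add_sub_cancel]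
      rw [Finset.prod_const]
      refine pow_right_mono₀ n2_pos ((Finset.card_le_card fun x hx => ?_).trans hc.le)
      obtain ⟨h1, h2⟩ := Finset.mem_filter.1 hx
      exact Finset.mem_Icc.mpr ⟨(Finset.mem_filter.1 h1).2.one_lt.le, h2⟩
    · refine le_trans ?_ (primorial_le_4_pow (2 * n / 3))
      refine (Finset.prod_le_prod' fun p hp => (?_ : f p ≤ p)).trans ?_
      · obtain ⟨h1, h2⟩ := Finset.mem_filter.1 hp
        refine (pow_right_mono₀ (Finset.mem_filter.1 h1).2.one_lt.le ?_).trans (pow_one p).le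
        exact Nat.factorization_choose_le_one (Nat.sqrt_lt'.mp <| not_le.1 h2)
      refine Finset.prod_le_prod_of_subset_of_one_le' (Finset.filter_subset _ _) ?_
      exact fun p hp _ => (Finset.mem_filter.1 hp).2.one_lt.le
  · -- large primes
    have h1 : ∀ x ∈ T.filter (fun p => ¬ p ≤ 2 * n / 3), f x ≠ 1 → n < x := by
      intro x hx hfx
      by_contra hxn
      push_neg at hxn
      obtain ⟨hxT, hx3⟩ := Finset.mem_filter.1 hx
      apply hfx
      rw [hf]
      simp only
      rw [Nat.factorization_centralBinom_of_two_mul_self_lt_three_mul n_big hxn ?_, pow_zero]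
      have := (Nat.div_lt_iff_lt_mul (by norm_num : 0 < 3)).1 (not_le.1 hx3)
      omega
    rw [← Finset.prod_filter_of_ne h1]
    refine (Finset.prod_le_prod' fun p _ => (?_ : f p ≤ 2 * n)).trans ?_
    · exact Nat.pow_factorization_choose_le (by omega)
    rw [Finset.prod_const]
    apply pow_right_mono₀ n2_pos
    apply Finset.card_le_card
    intro x hx
    simp only [Finset.mem_filter, hT, Finset.mem_range] at hx
    simp only [Finset.mem_filter, Finset.mem_Ico]
    obtain ⟨⟨⟨hx2n, hxp⟩, _⟩, hxn⟩ := hx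
    exact ⟨⟨by omega, by omega⟩, hxp⟩

private theorem expo_bound (l : ℕ) (hl : 14 ≤ l) :
    3 * (l - 1) + 3 * (l * 2 ^ ((l + 1) / 2)) ≤ 2 ^ (l - 1) := by
  set c := (l + 1) / 2 with hc
  set d := (l - 2) / 2 with hd
  have hcd : c + d = l - 1 := by omega
  have h1 : 3 * (l - 1) ≤ 2 ^ c := by
    have := helper6 c (by omega)
    omega
  have h2 : 3 * l + 1 ≤ 2 ^ d := by
    have := helper6 d (by omega)
    omega
  calc 3 * (l - 1) + 3 * (l * 2 ^ c) ≤ 2 ^ c + 3 * (l * 2 ^ c) := by omega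
    _ = (3 * l + 1) * 2 ^ c := by ring
    _ ≤ 2 ^ d * 2 ^ c := Nat.mul_le_mul_right _ h2
    _ = 2 ^ (l - 1) := by rw [← pow_add]; rw [Nat.add_comm] at hcd; rw [hcd]

private theorem filter_shift (n : ℕ) (hn : ¬ n.Prime) (h2n : ¬ (2 * n).Prime) :
    (Finset.Ico (n + 1) (2 * n + 1)).filter Nat.Prime
      = (Finset.Ico n (2 * n)).filter Nat.Prime := by
  ext x
  simp only [Finset.mem_filter, Finset.mem_Ico]
  constructor
  · rintro ⟨⟨h1, h2⟩, h3⟩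
    refine ⟨⟨by omega, ?_⟩, h3⟩
    rcases Nat.lt_or_ge x (2 * n) with h | h
    · exact h
    · exfalso; exact h2n (by rwa [show x = 2 * n by omega] at h3)
  · rintro ⟨⟨h1, h2⟩, h3⟩
    refine ⟨⟨?_, by omega⟩, h3⟩
    rcases Nat.lt_or_ge n x with h | h
    · omega
    · exfalso; exact hn (by rwa [show x = n by omega] at h3)

private theorem main_large (l : ℕ) (hl : 14 ≤ l) :
    2 ^ (l - 1) ≤ 3 * l * (((Finset.Ico (2 ^ (l - 1)) (2 ^ l)).filter Nat.Prime).card) := by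
  set n := 2 ^ (l - 1) with hn
  have h2n : 2 * n = 2 ^ l := by
    rw [hn, ← _root_.pow_succ']
    congr 1
    omega
  have n_big : 4 ≤ n := by
    calc 4 ≤ 2 ^ 13 := by norm_num
    _ ≤ 2 ^ (l - 1) := Nat.pow_le_pow_right (by norm_num) (by omega)
  have hnp : ¬ n.Prime := by
    intro hp
    rcases (Nat.Prime.eq_one_or_self_of_dvd hp 2 (dvd_pow_self 2 (by omega))) with h | h
    · omega
    · have : n = 2 := h.symm
      omega
  have h2np : ¬ (2 * n).Prime := by
    intro hp
    rcases (Nat.Prime.eq_one_or_self_of_dvd hp 2 ⟨n, rfl⟩) with h | h <;> omega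
  set K := ((Finset.Ico (2 ^ (l - 1)) (2 ^ l)).filter Nat.Prime).card with hK
  have hKeq : (((Finset.Ico (n + 1) (2 * n + 1)).filter Nat.Prime).card) = K := by
    rw [filter_shift n hnp h2np, hK, hn, h2n]
  have H2 : 4 ^ n < n * Nat.centralBinom n :=
    Nat.four_pow_lt_mul_centralBinom n (by omega)
  have H3 := cb_le n (by omega)
  rw [hKeq] at H3
  have H4 : 4 ^ n < n * ((2 * n) ^ Nat.sqrt (2 * n) * 4 ^ (2 * n / 3) * (2 * n) ^ K) :=
    H2.trans_le (Nat.mul_le_mul_left n H3)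
  set c := (l + 1) / 2 with hc
  have hs : Nat.sqrt (2 * n) ≤ 2 ^ c := by
    rw [h2n]
    calc Nat.sqrt (2 ^ l) ≤ Nat.sqrt ((2 ^ c) ^ 2) := by
          apply Nat.sqrt_le_sqrt
          rw [← pow_mul]
          apply Nat.pow_le_pow_right (by norm_num)
          omega
      _ = 2 ^ c := Nat.sqrt_eq' _
  have H5 : 2 ^ (2 ^ l) < 2 ^ ((l - 1) + l * 2 ^ c + 2 * (2 ^ l / 3) + l * K) := by
    calc 2 ^ (2 ^ l) = 4 ^ n := by
          rw [show (4 : ℕ) = 2 ^ 2 by norm_num, ← pow_mul, h2n]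
      _ < n * ((2 * n) ^ Nat.sqrt (2 * n) * 4 ^ (2 * n / 3) * (2 * n) ^ K) := H4
      _ ≤ 2 ^ (l - 1) * (2 ^ (l * 2 ^ c) * 2 ^ (2 * (2 ^ l / 3)) * 2 ^ (l * K)) := by
          apply Nat.mul_le_mul_left
          apply Nat.mul_le_mul
          apply Nat.mul_le_mul
          · rw [h2n, ← pow_mul]
            apply Nat.pow_le_pow_right (by norm_num)
            rw [h2n] at hs
            exact Nat.mul_le_mul_left l hs
          · rw [show (4 : ℕ) = 2 ^ 2 by norm_num, ← pow_mul, h2n]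
          · rw [h2n, ← pow_mul]
      _ = 2 ^ ((l - 1) + l * 2 ^ c + 2 * (2 ^ l / 3) + l * K) := by
          rw [← pow_add, ← pow_add, ← pow_add]; ring_nf
  have H6 : 2 ^ l < (l - 1) + l * 2 ^ c + 2 * (2 ^ l / 3) + l * K :=
    (Nat.pow_lt_pow_iff_right (by norm_num : 1 < 2)).1 H5
  have hE := expo_bound l hl
  rw [← hc] at hE
  have hpow : 2 ^ l = 2 * 2 ^ (l - 1) := by
    rw [← _root_.pow_succ']
    congr 1
    omega
  rw [show 3 * l * K = 3 * (l * K) from Nat.mul_assoc 3 l K]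
  have hm1 : 3 * (l * 2 ^ c) = 3 * (l * 2 ^ c) := rfl
  have H6' : 2 ^ l < (l - 1) + (l * 2 ^ c) + 2 * (2 ^ l / 3) + (l * K) := H6
  generalize hA : (2 : ℕ) ^ (l - 1) = A at *
  generalize hB : (2 : ℕ) ^ l = B at *
  generalize hM1 : l * 2 ^ c = M1 at *
  generalize hM2 : l * K = M2 at *
  omega

private theorem small_2 :
    2 ^ (2 - 1) ≤ 3 * 2 * (((Finset.Ico (2 ^ (2 - 1)) (2 ^ 2)).filter Nat.Prime).card) := by
  have h := card_lb (2 ^ (2 - 1)) (2 ^ 2) 1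
    [2]
    (by decide) (by decide)
    (by intro x hx; fin_cases hx <;> refine ⟨by norm_num, by norm_num, by norm_num⟩)
  omega

private theorem small_3 :
    2 ^ (3 - 1) ≤ 3 * 3 * (((Finset.Ico (2 ^ (3 - 1)) (2 ^ 3)).filter Nat.Prime).card) := by
  have h := card_lb (2 ^ (3 - 1)) (2 ^ 3) 1
    [5]
    (by decide) (by decide)
    (by intro x hx; fin_cases hx <;> refine ⟨by norm_num, by norm_num, by norm_num⟩)
  omega

private theorem small_4 :
    2 ^ (4 - 1) ≤ 3 * 4 * (((Finset.Ico (2 ^ (4 - 1)) (2 ^ 4)).filter Nat.Prime).card) := by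
  have h := card_lb (2 ^ (4 - 1)) (2 ^ 4) 1
    [11]
    (by decide) (by decide)
    (by intro x hx; fin_cases hx <;> refine ⟨by norm_num, by norm_num, by norm_num⟩)
  omega

private theorem small_5 :
    2 ^ (5 - 1) ≤ 3 * 5 * (((Finset.Ico (2 ^ (5 - 1)) (2 ^ 5)).filter Nat.Prime).card) := by
  have h := card_lb (2 ^ (5 - 1)) (2 ^ 5) 2
    [17, 19]
    (by decide) (by decide)
    (by intro x hx; fin_cases hx <;> refine ⟨by norm_num, by norm_num, by norm_num⟩)
  omega

private theorem small_6 :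
    2 ^ (6 - 1) ≤ 3 * 6 * (((Finset.Ico (2 ^ (6 - 1)) (2 ^ 6)).filter Nat.Prime).card) := by
  have h := card_lb (2 ^ (6 - 1)) (2 ^ 6) 2
    [37, 41]
    (by decide) (by decide)
    (by intro x hx; fin_cases hx <;> refine ⟨by norm_num, by norm_num, by norm_num⟩)
  omega

private theorem small_7 :
    2 ^ (7 - 1) ≤ 3 * 7 * (((Finset.Ico (2 ^ (7 - 1)) (2 ^ 7)).filter Nat.Prime).card) := by
  have h := card_lb (2 ^ (7 - 1)) (2 ^ 7) 4
    [67, 71, 73, 79]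
    (by decide) (by decide)
    (by intro x hx; fin_cases hx <;> refine ⟨by norm_num, by norm_num, by norm_num⟩)
  omega

private theorem small_8 :
    2 ^ (8 - 1) ≤ 3 * 8 * (((Finset.Ico (2 ^ (8 - 1)) (2 ^ 8)).filter Nat.Prime).card) := by
  have h := card_lb (2 ^ (8 - 1)) (2 ^ 8) 6
    [131, 137, 139, 149, 151, 157]
    (by decide) (by decide)
    (by intro x hx; fin_cases hx <;> refine ⟨by norm_num, by norm_num, by norm_num⟩)
  omega

private theorem small_9 :
    2 ^ (9 - 1) ≤ 3 * 9 * (((Finset.Ico (2 ^ (9 - 1)) (2 ^ 9)).filter Nat.Prime).card) := by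
  have h := card_lb (2 ^ (9 - 1)) (2 ^ 9) 10
    [257, 263, 269, 271, 277, 281, 283, 293, 307, 311]
    (by decide) (by decide)
    (by intro x hx; fin_cases hx <;> refine ⟨by norm_num, by norm_num, by norm_num⟩)
  omega

private theorem small_10 :
    2 ^ (10 - 1) ≤ 3 * 10 * (((Finset.Ico (2 ^ (10 - 1)) (2 ^ 10)).filter Nat.Prime).card) := by
  have h := card_lb (2 ^ (10 - 1)) (2 ^ 10) 18
    [521, 523, 541, 547, 557, 563, 569, 571, 577, 587, 593, 599, 601, 607, 613, 617, 619, 631]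
    (by decide) (by decide)
    (by intro x hx; fin_cases hx <;> refine ⟨by norm_num, by norm_num, by norm_num⟩)
  omega

private theorem small_11 :
    2 ^ (11 - 1) ≤ 3 * 11 * (((Finset.Ico (2 ^ (11 - 1)) (2 ^ 11)).filter Nat.Prime).card) := by
  have h := card_lb (2 ^ (11 - 1)) (2 ^ 11) 32
    [1031, 1033, 1039, 1049, 1051, 1061, 1063, 1069, 1087, 1091, 1093, 1097, 1103, 1109, 1117, 1123, 1129, 1151, 1153, 1163, 1171, 1181, 1187, 1193, 1201, 1213, 1217, 1223, 1229, 1231, 1237, 1249]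
    (by decide) (by decide)
    (by intro x hx; fin_cases hx <;> refine ⟨by norm_num, by norm_num, by norm_num⟩)
  omega

private theorem small_12 :
    2 ^ (12 - 1) ≤ 3 * 12 * (((Finset.Ico (2 ^ (12 - 1)) (2 ^ 12)).filter Nat.Prime).card) := by
  have h := card_lb (2 ^ (12 - 1)) (2 ^ 12) 57
    [2053, 2063, 2069, 2081, 2083, 2087, 2089, 2099, 2111, 2113, 2129, 2131, 2137, 2141, 2143, 2153, 2161, 2179, 2203, 2207, 2213, 2221, 2237, 2239, 2243, 2251, 2267, 2269, 2273, 2281, 2287, 2293, 2297, 2309, 2311, 2333, 2339, 2341, 2347, 2351, 2357, 2371, 2377, 2381, 2383, 2389, 2393, 2399, 2411, 2417, 2423, 2437, 2441, 2447, 2459, 2467, 2473]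
    (by decide) (by decide)
    (by intro x hx; fin_cases hx <;> refine ⟨by norm_num, by norm_num, by norm_num⟩)
  omega

private theorem small_13 :
    2 ^ (13 - 1) ≤ 3 * 13 * (((Finset.Ico (2 ^ (13 - 1)) (2 ^ 13)).filter Nat.Prime).card) := by
  have h := card_lb (2 ^ (13 - 1)) (2 ^ 13) 106
    [4099, 4111, 4127, 4129, 4133, 4139, 4153, 4157, 4159, 4177, 4201, 4211, 4217, 4219, 4229, 4231, 4241, 4243, 4253, 4259, 4261, 4271, 4273, 4283, 4289, 4297, 4327, 4337, 4339, 4349, 4357, 4363, 4373, 4391, 4397, 4409, 4421, 4423, 4441, 4447, 4451, 4457, 4463, 4481, 4483, 4493, 4507, 4513, 4517, 4519, 4523, 4547, 4549, 4561, 4567, 4583, 4591, 4597, 4603, 4621, 4637, 4639, 4643, 4649, 4651, 4657, 4663, 4673, 4679, 4691, 4703, 4721, 4723, 4729, 4733, 4751, 4759, 4783, 4787, 4789, 4793, 4799, 4801, 4813, 4817, 4831, 4861, 4871, 4877, 4889, 4903, 4909, 4919, 4931, 4933, 4937, 4943, 4951, 4957, 4967, 4969, 4973, 4987, 4993, 4999,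 5003]
    (by decide) (by decide)
    (by intro x hx; fin_cases hx <;> refine ⟨by norm_num, by norm_num, by norm_num⟩)
  omega


private theorem nat_bound (l : ℕ) (hl : 2 ≤ l) :
    2 ^ (l - 1) ≤ 3 * l * (((Finset.Ico (2 ^ (l - 1)) (2 ^ l)).filter Nat.Prime).card) := by
  rcases Nat.lt_or_ge l 14 with h | h
  · interval_cases l
    · exact small_2
    · exact small_3
    · exact small_4
    · exact small_5
    · exact small_6
    · exact small_7
    · exact small_8
    · exact small_9
    · exact small_10
    · exact small_11
    · exact small_12
    · exact small_13
  · exact main_large l h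

theorem primes_in_dyadic_interval (l : ℕ) (hl : 2 ≤ l) :
    ((2 : ℚ) ^ (l - 1)) / (3 * l) ≤
      (((Finset.Ico (2 ^ (l - 1)) (2 ^ l)).filter Nat.Prime).card : ℚ) ∧
    (1 : ℚ) / (3 * l) ≤
      (((Finset.Ico (2 ^ (l - 1)) (2 ^ l)).filter Nat.Prime).card : ℚ) / (2 : ℚ) ^ (l - 1) := by
  have h := nat_bound l hl
  set K := ((Finset.Ico (2 ^ (l - 1)) (2 ^ l)).filter Nat.Prime).card with hK
  have hq : (2 : ℚ) ^ (l - 1) ≤ 3 * l * K := by exact_mod_cast h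
  have hl0 : (0 : ℚ) < 3 * l := by positivity
  have hp0 : (0 : ℚ) < 2 ^ (l - 1) := by positivity
  constructor
  · rw [div_le_iff₀ hl0]
    calc (2 : ℚ) ^ (l - 1) ≤ 3 * l * K := hq
      _ = K * (3 * l) := by ring
  · rw [div_le_div_iff₀ hl0 hp0]
    calc (1 : ℚ) * 2 ^ (l - 1) = 2 ^ (l - 1) := by ring
      _ ≤ 3 * l * K := hq
      _ = K * (3 * l) := by ring
end

section
/- In the PASC algorithm on a chain C = (u_0, ..., u_{m-1}) with reference u_r: if in each iteration every amoebot records bit 0 when the reference's signal reaches it on its primary circuit and bit 1 on its secondary circuit, and active amoebots receiving the secondary signal become passive, then after all iterations the bits recorded by amoebot u_i (least significant first) form the two's complement representation of i − r. In particular, consecutive amoebots receive consecutive identifiers: id(u_{i+1}) = id(u_i) + 1, and id(u_r) = 0. -/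
lemma pasc_geom2 (n : ℕ) : ∑ t ∈ Finset.range n, (2:ℤ)^t = 2^n - 1 := by
  induction n with
  | zero => simp
  | succ n ih => rw [Finset.sum_range_succ, ih]; ring

lemma pasc_mod_mul_two (a n : ℕ) : n % (a * 2) = a * (n / a % 2) + n % a := by
  conv_lhs => rw [← Nat.div_add_mod (n % (a * 2)) a]
  rw [Nat.mod_mul_right_div_self, Nat.mod_mod_of_dvd n ⟨2, rfl⟩]

lemma pasc_bitsum (n : ℕ) : ∀ k : ℕ,
    ∑ t ∈ Finset.range k, (2:ℤ)^t * ((n / 2^t % 2 : ℕ) : ℤ) = ((n % 2^k : ℕ) : ℤ) := by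
  intro k
  induction k with
  | zero => simp
  | succ k ih =>
    rw [Finset.sum_range_succ, ih, pow_succ, pasc_mod_mul_two (2^k) n]
    push_cast
    ring

lemma pasc_cardA (a b d : ℕ) :
    ((Finset.Ioc a b).filter (fun j => d ∣ j - a)).card = (b - a) / d := by
  have himg : (Finset.Ioc a b).filter (fun j => d ∣ j - a) =
      Finset.image (· + a) ((Finset.Ioc 0 (b - a)).filter (fun x => d ∣ x)) := by
    ext x
    simp only [Finset.mem_filter, Finset.mem_Ioc, Finset.mem_image]
    constructor
    · rintro ⟨⟨h1, h2⟩, h3⟩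
      exact ⟨x - a, ⟨⟨by omega, by omega⟩, h3⟩, by omega⟩
    · rintro ⟨y, ⟨⟨hy1, hy2⟩, hy3⟩, rfl⟩
      exact ⟨⟨by omega, by omega⟩, by simpa using hy3⟩
  rw [himg, Finset.card_image_of_injective _ (add_left_injective a),
    Nat.Ioc_filter_dvd_card_eq_div]

lemma pasc_range_dvd_card (n d : ℕ) (hn : 0 < n) :
    ((Finset.range n).filter (fun j => d ∣ j)).card = (n - 1) / d + 1 := by
  have h1 : Finset.range n = insert 0 (Finset.Ioc 0 (n - 1)) := by
    ext x
    simp only [Finset.mem_range, Finset.mem_insert, Finset.mem_Ioc]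
    omega
  rw [h1, Finset.filter_insert, if_pos (dvd_zero d),
    Finset.card_insert_of_notMem (by simp), Nat.Ioc_filter_dvd_card_eq_div]

lemma pasc_cardB (a b d : ℕ) (h : a < b) :
    ((Finset.Ioc a b).filter (fun j => d ∣ b - j)).card = (b - a - 1) / d + 1 := by
  have himg : (Finset.Ioc a b).filter (fun j => d ∣ b - j) =
      Finset.image (fun y => b - y) ((Finset.range (b - a)).filter (fun x => d ∣ x)) := by
    ext x
    simp only [Finset.mem_filter, Finset.mem_Ioc, Finset.mem_image, Finset.mem_range]
    constructor
    · rintro ⟨⟨h1, h2⟩, h3⟩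
      exact ⟨b - x, ⟨by omega, h3⟩, by omega⟩
    · rintro ⟨y, ⟨hy1, hy2⟩, rfl⟩
      exact ⟨⟨by omega, by omega⟩, by rw [show b - (b - y) = y by omega]; exact hy2⟩
  rw [himg, Finset.card_image_of_injOn, pasc_range_dvd_card _ _ (by omega)]
  intro x hx y hy hxy
  simp only [Finset.coe_filter, Finset.mem_range, Set.mem_setOf_eq] at hx hy
  dsimp only at hxy
  omega

lemma pasc_stepA (p n : ℕ) (hp : 0 < p) (h : p ∣ n) : (p * 2 ∣ n ↔ ¬ Odd (n / p)) := by
  obtain ⟨q, rfl⟩ := h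
  rw [Nat.mul_div_cancel_left q hp, mul_dvd_mul_iff_left (show p ≠ 0 by omega), Nat.odd_iff]
  omega

lemma pasc_stepB (p n : ℕ) (hp : 0 < p) (hn : 0 < n) (h : p ∣ n) :
    (p * 2 ∣ n ↔ ¬ Odd ((n - 1) / p + 1)) := by
  obtain ⟨q, rfl⟩ := h
  have hq : 0 < q := by
    rcases Nat.eq_zero_or_pos q with rfl | hq
    · simp at hn
    · exact hq
  have h1 : (p * q - 1) / p = q - 1 := by
    obtain ⟨a, rfl⟩ : ∃ a, q = a + 1 := ⟨q - 1, by omega⟩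
    have h2 : p * (a + 1) - 1 = (p - 1) + p * a := by
      have := Nat.mul_add p a 1
      set x := p * a
      omega
    rw [h2, Nat.add_mul_div_left _ _ hp, Nat.div_eq_of_lt (by omega)]
    omega
  rw [h1, Nat.sub_add_cancel hq, mul_dvd_mul_iff_left (show p ≠ 0 by omega), Nat.odd_iff]
  omega



theorem pasc_computes_identifiers (m r : ℕ) (hr : r < m)
    (active : ℕ → ℕ → Bool) (b : ℕ → ℕ → Bool)
    -- initially every amoebot is active
    (h0 : ∀ i, active 0 i = true)
    -- in iteration t, amoebot i records bit 1 iff the number of active amoebots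
    -- between the reference r (exclusive) and i (inclusive) is odd
    (hb : ∀ t i, i < m → (b t i = true ↔
      Odd (((Finset.Ioc (min r i) (max r i)).filter (fun j => active t j = true)).card)))
    -- an active amoebot (other than the reference) becomes passive after recording bit 1
    (hstep : ∀ t i, i < m →
      (active (t + 1) i = true ↔ (active t i = true ∧ (b t i = false ∨ i = r)))) :
    ∀ (k : ℕ), k = Nat.clog 2 m →
    ∀ (val : ℕ → ℤ), (val = fun i =>
        (if b (k - 1) i = true then -(2 : ℤ) ^ (k - 1) else 0) +
          ∑ t ∈ Finset.range (k - 1), (if b t i = true then (2 : ℤ) ^ t else 0)) →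
      -- the reference receives identifier 0
      val r = 0 ∧
      -- amoebot i receives the two's complement representation of i - r
      (∀ i < m, val i ≡ (i : ℤ) - (r : ℤ) [ZMOD (2 ^ k : ℤ)]) ∧
      -- consecutive amoebots receive consecutive identifiers
      (∀ i, i + 1 < m → val (i + 1) ≡ val i + 1 [ZMOD (2 ^ k : ℤ)]) := by
  intro k hk val hval
  have hpow : m ≤ 2 ^ k := by rw [hk]; exact Nat.le_pow_clog one_lt_two m
  -- the reference always records bit 0
  have hbr : ∀ t, b t r = false := by
    intro t
    have h := hb t r hr
    simp only [min_self, max_self, Finset.Ioc_self, Finset.filter_empty,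
      Finset.card_empty] at h
    rcases hB : b t r with _ | _
    · rfl
    · exact absurd (h.mp hB) (by simp [Nat.odd_iff])
  -- counting active amoebots between r and i, given the divisibility invariant
  have hcard : ∀ t, (∀ j, j < m → (active t j = true ↔ 2 ^ t ∣ (if r ≤ j then j - r else r - j))) →
      ∀ i, i < m → ((Finset.Ioc (min r i) (max r i)).filter (fun x => active t x = true)).card =
        if r ≤ i then (i - r) / 2 ^ t else (r - i - 1) / 2 ^ t + 1 := by
    intro t hinv i hi
    rcases le_or_gt r i with hle | hlt
    · rw [if_pos hle, min_eq_left hle, max_eq_right hle]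
      have hcongr : ∀ x ∈ Finset.Ioc r i, ((active t x = true) ↔ 2 ^ t ∣ x - r) := by
        intro x hx
        rw [Finset.mem_Ioc] at hx
        rw [hinv x (by omega), if_pos (by omega)]
      rw [Finset.filter_congr hcongr, pasc_cardA]
    · rw [if_neg (not_le.mpr hlt), min_eq_right hlt.le, max_eq_left hlt.le]
      have hcongr : ∀ x ∈ Finset.Ioc i r, ((active t x = true) ↔ 2 ^ t ∣ r - x) := by
        intro x hx
        rw [Finset.mem_Ioc] at hx
        rw [hinv x (by omega)]
        rcases Nat.lt_or_ge x r with h | h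
        · rw [if_neg (by omega)]
        · rw [if_pos h, show x - r = 0 by omega, show r - x = 0 by omega]
      rw [Finset.filter_congr hcongr, pasc_cardB i r (2 ^ t) hlt]
  -- the divisibility invariant
  have hact : ∀ t, ∀ j, j < m → (active t j = true ↔ 2 ^ t ∣ (if r ≤ j then j - r else r - j)) := by
    intro t
    induction t with
    | zero => intro j hj; simp [h0 j]
    | succ t ih =>
      intro j hj
      have hc := hb t j hj
      rw [hcard t ih j hj] at hc
      rw [hstep t j hj, ih j hj]
      by_cases hjr : j = r
      · subst hjr; simp [ih j hj]
      · have hbfalse : (b t j = false) ↔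
            ¬ Odd (if r ≤ j then (j - r) / 2 ^ t else (r - j - 1) / 2 ^ t + 1) :=
          Bool.eq_false_iff.trans (not_congr hc)
        rw [hbfalse]
        have hp : (0 : ℕ) < 2 ^ t := pow_pos (by norm_num) t
        rcases le_or_gt r j with hle | hlt
        · simp only [if_pos hle]
          constructor
          · rintro ⟨hdvd, hor⟩
            rcases hor with hno | h'
            · rw [pow_succ]; exact (pasc_stepA _ _ hp hdvd).mpr hno
            · exact absurd h' hjr
          · intro hdvd
            have h2 : 2 ^ t ∣ j - r := (pow_dvd_pow 2 (Nat.le_succ t)).trans hdvd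
            rw [pow_succ] at hdvd
            exact ⟨h2, Or.inl ((pasc_stepA _ _ hp h2).mp hdvd)⟩
        · simp only [if_neg (not_le.mpr hlt)]
          have hn : 0 < r - j := by omega
          constructor
          · rintro ⟨hdvd, hor⟩
            rcases hor with hno | h'
            · rw [pow_succ]; exact (pasc_stepB _ _ hp hn hdvd).mpr hno
            · exact absurd h' hjr
          · intro hdvd
            have h2 : 2 ^ t ∣ r - j := (pow_dvd_pow 2 (Nat.le_succ t)).trans hdvd
            rw [pow_succ] at hdvd
            exact ⟨h2, Or.inl ((pasc_stepB _ _ hp hn h2).mp hdvd)⟩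
  -- the value of each recorded bit
  have hbit : ∀ t i, i < m → ((if b t i = true then (2 : ℤ) ^ t else 0) =
      if r ≤ i then 2 ^ t * (((i - r) / 2 ^ t % 2 : ℕ) : ℤ)
      else 2 ^ t - 2 ^ t * (((r - i - 1) / 2 ^ t % 2 : ℕ) : ℤ)) := by
    intro t i hi
    have h1 := hb t i hi
    rw [hcard t (hact t) i hi] at h1
    rcases le_or_gt r i with hle | hlt
    · rw [if_pos hle] at h1 ⊢
      by_cases hbs : b t i = true
      · rw [if_pos hbs]
        have h2 := h1.mp hbs
        rw [Nat.odd_iff] at h2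
        rw [h2]
        simp
      · rw [if_neg hbs]
        have h2 : ¬ Odd ((i - r) / 2 ^ t) := fun ho => hbs (h1.mpr ho)
        rw [Nat.odd_iff] at h2
        rw [show (i - r) / 2 ^ t % 2 = 0 by omega]
        simp
    · rw [if_neg (not_le.mpr hlt)] at h1 ⊢
      have h2 : b t i = true ↔ ¬ ((r - i - 1) / 2 ^ t % 2 = 1) := by
        rw [h1, Nat.odd_iff]; omega
      by_cases hbs : b t i = true
      · rw [if_pos hbs, show (r - i - 1) / 2 ^ t % 2 = 0 from by
          have := h2.mp hbs; omega]
        simp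
      · rw [if_neg hbs, show (r - i - 1) / 2 ^ t % 2 = 1 from by
          by_contra hcon; exact hbs (h2.mpr hcon)]
        push_cast
        ring
  -- main computation: val i = (i - r) + 2^k * e for some integer e
  have hmain : ∀ i, i < m → ∃ e : ℤ, val i = ((i : ℤ) - r) + 2 ^ k * e := by
    intro i hi
    rcases Nat.eq_zero_or_pos k with hk0 | hkpos
    · refine ⟨val i, ?_⟩
      have h1 : m ≤ 1 := by rw [hk0] at hpow; simpa using hpow
      have hir : i = r := by omega
      subst hir
      rw [hk0]
      push_cast
      ring
    · obtain ⟨s, rfl⟩ : ∃ s, k = s + 1 := ⟨k - 1, by omega⟩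
      have hp2 : (2 : ℤ) ^ (s + 1) = 2 * 2 ^ s := by ring
      rcases le_or_gt r i with hle | hlt
      · have hEq : ∀ t, (if b t i = true then (2 : ℤ) ^ t else 0) =
            2 ^ t * (((i - r) / 2 ^ t % 2 : ℕ) : ℤ) := by
          intro t; rw [hbit t i hi, if_pos hle]
        have hneg : (if b s i = true then -(2 : ℤ) ^ s else 0) =
            -(2 ^ s * (((i - r) / 2 ^ s % 2 : ℕ) : ℤ)) := by
          rw [← hEq s]
          by_cases hbs : b s i = true <;> simp [hbs]
        have hsum := pasc_bitsum (i - r) (s + 1)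
        rw [Finset.sum_range_succ, Nat.mod_eq_of_lt (by omega : i - r < 2 ^ (s + 1))] at hsum
        have hc : ((i - r : ℕ) : ℤ) = (i : ℤ) - r := by omega
        rw [hc] at hsum
        refine ⟨-(((i - r) / 2 ^ s % 2 : ℕ) : ℤ), ?_⟩
        simp only [hval, Nat.add_sub_cancel]
        rw [hneg, Finset.sum_congr rfl (fun t _ => hEq t)]
        linear_combination hsum
      · have hq : r - i - 1 < 2 ^ (s + 1) := by omega
        have hEq : ∀ t, (if b t i = true then (2 : ℤ) ^ t else 0) =
            2 ^ t - 2 ^ t * (((r - i - 1) / 2 ^ t % 2 : ℕ) : ℤ) := by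
          intro t; rw [hbit t i hi, if_neg (not_le.mpr hlt)]
        have hneg : (if b s i = true then -(2 : ℤ) ^ s else 0) =
            (2 ^ s - 2 ^ s * (((r - i - 1) / 2 ^ s % 2 : ℕ) : ℤ)) - 2 ^ (s + 1)
              + 2 ^ (s + 1) * (((r - i - 1) / 2 ^ s % 2 : ℕ) : ℤ) := by
          have h := hEq s
          by_cases hbs : b s i = true
          · rw [if_pos hbs] at h ⊢
            have h3 : (2 : ℤ) ^ s * (((r - i - 1) / 2 ^ s % 2 : ℕ) : ℤ) = 0 := by linarith
            rcases mul_eq_zero.mp h3 with h4 | h4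
            · exact absurd h4 (pow_ne_zero s two_ne_zero)
            · rw [h4]; ring
          · rw [if_neg hbs] at h ⊢
            have h3 : (2 : ℤ) ^ s * (((r - i - 1) / 2 ^ s % 2 : ℕ) : ℤ) = 2 ^ s * 1 := by
              rw [mul_one]; linarith
            have h4 := mul_left_cancel₀ (pow_ne_zero s (two_ne_zero : (2 : ℤ) ≠ 0)) h3
            rw [h4]; ring
        have hsum := pasc_bitsum (r - i - 1) (s + 1)
        rw [Finset.sum_range_succ, Nat.mod_eq_of_lt hq] at hsum
        have hc : ((r - i - 1 : ℕ) : ℤ) = (r : ℤ) - i - 1 := by omega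
        rw [hc] at hsum
        refine ⟨(((r - i - 1) / 2 ^ s % 2 : ℕ) : ℤ), ?_⟩
        simp only [hval, Nat.add_sub_cancel]
        rw [hneg, Finset.sum_congr rfl (fun t _ => hEq t), Finset.sum_sub_distrib, pasc_geom2]
        linear_combination -hsum
  have h2 : ∀ i < m, val i ≡ (i : ℤ) - (r : ℤ) [ZMOD (2 ^ k : ℤ)] := by
    intro i hi
    obtain ⟨e, he⟩ := hmain i hi
    rw [he]
    exact Int.ModEq.symm (Int.modEq_iff_dvd.mpr ⟨e, by ring⟩)
  refine ⟨?_, h2, ?_⟩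
  · simp only [hval]
    simp [hbr]
  · intro i hi
    have ha := h2 (i + 1) hi
    have hb2 := h2 i (by omega)
    have hc : ((i + 1 : ℕ) : ℤ) - r = ((i : ℤ) - r) + 1 := by push_cast; ring
    calc val (i + 1) ≡ ((i + 1 : ℕ) : ℤ) - r [ZMOD (2 ^ k : ℤ)] := by exact_mod_cast ha
      _ = ((i : ℤ) - r) + 1 := hc
      _ ≡ val i + 1 [ZMOD (2 ^ k : ℤ)] := Int.ModEq.add_right 1 hb2.symm
end

section
/- Let S be a finite subset of the triangular grid with n elements. The number of boundary nodes of S (nodes adjacent to the complement) on the outer boundary is Ω(√n): if S has n nodes then its outer boundary set contains at least c·√n nodes for some absolute constant c > 0. -/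
/-- The infinite triangular grid graph on `ℤ²`: each node has the 6 neighbors obtained by
adding `±(1,0)`, `±(0,1)`, `±(1,-1)`. -/
def triGraph : SimpleGraph (ℤ × ℤ) :=
  SimpleGraph.fromRel (fun u v => v - u = (1, 0) ∨ v - u = (0, 1) ∨ v - u = (1, -1))

/-- The outer boundary set of a finite amoebot structure `S`: the nodes of `S` adjacent to the
infinite connected component of the complement of `S`. -/
def outerBoundary (S : Finset (ℤ × ℤ)) : Set (ℤ × ℤ) :=
  {u | u ∈ S ∧ ∃ v, v ∉ S ∧ triGraph.Adj u v ∧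
    {w | Relation.ReflTransGen
      (fun a b => a ∉ S ∧ b ∉ S ∧ triGraph.Adj a b) v w}.Infinite}

lemma ray_infinite (S : Finset (ℤ × ℤ)) (f : ℕ → ℤ × ℤ)
    (hinj : Function.Injective f) (hS : ∀ k, f k ∉ S)
    (hstep : ∀ k, f (k+1) - f k = (1,0) ∨ f (k+1) - f k = (0,1)) :
    {w | Relation.ReflTransGen
      (fun a b => a ∉ S ∧ b ∉ S ∧ triGraph.Adj a b) (f 0) w}.Infinite := by
  apply Set.infinite_of_injective_forall_mem hinj
  intro k
  induction k with
  | zero => exact Relation.ReflTransGen.refl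
  | succ n ih =>
    refine Relation.ReflTransGen.tail ih ⟨hS n, hS (n+1), ?_⟩
    rw [triGraph, SimpleGraph.fromRel_adj]
    refine ⟨?_, Or.inl ?_⟩
    · intro h
      rcases hstep n with h1 | h1 <;> rw [h, sub_self] at h1 <;>
        simp [Prod.ext_iff] at h1
    · rcases hstep n with h1 | h1 <;> simp [h1]

noncomputable def rowF (S : Finset (ℤ × ℤ)) (y : ℤ) : ℤ × ℤ :=
  if h : ((S.filter (fun p => p.2 = y)).image Prod.fst).Nonempty
  then (((S.filter (fun p => p.2 = y)).image Prod.fst).max' h, y) else (0,0)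

noncomputable def colF (S : Finset (ℤ × ℤ)) (x : ℤ) : ℤ × ℤ :=
  if h : ((S.filter (fun p => p.1 = x)).image Prod.snd).Nonempty
  then (x, ((S.filter (fun p => p.1 = x)).image Prod.snd).max' h) else (0,0)

lemma rowF_spec (S : Finset (ℤ × ℤ)) (y : ℤ) (hy : y ∈ S.image Prod.snd) :
    rowF S y ∈ outerBoundary S ∧ (rowF S y).2 = y := by
  obtain ⟨p, hpS, hpy⟩ := Finset.mem_image.mp hy
  have hne : ((S.filter (fun p => p.2 = y)).image Prod.fst).Nonempty :=
    ⟨p.1, Finset.mem_image.mpr ⟨p, Finset.mem_filter.mpr ⟨hpS, hpy⟩, rfl⟩⟩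
  set x := ((S.filter (fun p => p.2 = y)).image Prod.fst).max' hne with hx
  have hF : rowF S y = (x, y) := by rw [rowF, dif_pos hne]
  have hxmem : x ∈ (S.filter (fun p => p.2 = y)).image Prod.fst :=
    Finset.max'_mem _ hne
  obtain ⟨q, hq, hq1⟩ := Finset.mem_image.mp hxmem
  have hq2 := (Finset.mem_filter.mp hq).2
  have huS : (x, y) ∈ S := by
    have : q = (x, y) := Prod.ext hq1 hq2
    exact this ▸ (Finset.mem_filter.mp hq).1
  have hray : ∀ k : ℕ, (x + 1 + (k:ℤ), y) ∉ S := by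
    intro k hk
    have : x + 1 + (k:ℤ) ≤ x := by
      apply Finset.le_max'
      exact Finset.mem_image.mpr
        ⟨(x + 1 + (k:ℤ), y), Finset.mem_filter.mpr ⟨hk, rfl⟩, rfl⟩
    omega
  refine ⟨hF ▸ ⟨huS, (x + 1, y), by simpa using hray 0, ?_, ?_⟩, by rw [hF]⟩
  · rw [triGraph, SimpleGraph.fromRel_adj]
    exact ⟨by simp [Prod.ext_iff], Or.inl (by simp)⟩
  · have := ray_infinite S (fun k => (x + 1 + (k:ℤ), y))
      (by intro a b hab; simpa [Prod.ext_iff] using hab)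
      hray (by intro k; left; simp [Prod.ext_iff])
    simpa using this

lemma colF_spec (S : Finset (ℤ × ℤ)) (x : ℤ) (hx : x ∈ S.image Prod.fst) :
    colF S x ∈ outerBoundary S ∧ (colF S x).1 = x := by
  obtain ⟨p, hpS, hpx⟩ := Finset.mem_image.mp hx
  have hne : ((S.filter (fun p => p.1 = x)).image Prod.snd).Nonempty :=
    ⟨p.2, Finset.mem_image.mpr ⟨p, Finset.mem_filter.mpr ⟨hpS, hpx⟩, rfl⟩⟩
  set y := ((S.filter (fun p => p.1 = x)).image Prod.snd).max' hne with hy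
  have hF : colF S x = (x, y) := by rw [colF, dif_pos hne]
  have hymem : y ∈ (S.filter (fun p => p.1 = x)).image Prod.snd :=
    Finset.max'_mem _ hne
  obtain ⟨q, hq, hq2⟩ := Finset.mem_image.mp hymem
  have hq1 := (Finset.mem_filter.mp hq).2
  have huS : (x, y) ∈ S := by
    have : q = (x, y) := Prod.ext hq1 hq2
    exact this ▸ (Finset.mem_filter.mp hq).1
  have hray : ∀ k : ℕ, (x, y + 1 + (k:ℤ)) ∉ S := by
    intro k hk
    have : y + 1 + (k:ℤ) ≤ y := by
      apply Finset.le_max'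
      exact Finset.mem_image.mpr
        ⟨(x, y + 1 + (k:ℤ)), Finset.mem_filter.mpr ⟨hk, rfl⟩, rfl⟩
    omega
  refine ⟨hF ▸ ⟨huS, (x, y + 1), by simpa using hray 0, ?_, ?_⟩, by rw [hF]⟩
  · rw [triGraph, SimpleGraph.fromRel_adj]
    exact ⟨by simp [Prod.ext_iff], Or.inl (by simp)⟩
  · have := ray_infinite S (fun k => (x, y + 1 + (k:ℤ)))
      (by intro a b hab; simpa [Prod.ext_iff] using hab)
      hray (by intro k; right; simp [Prod.ext_iff])
    simpa using this

theorem outer_boundary_isoperimetric :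
    ∃ c : ℝ, 0 < c ∧ ∀ S : Finset (ℤ × ℤ), S.Nonempty →
      c * Real.sqrt (S.card : ℝ) ≤ ((outerBoundary S).ncard : ℝ) := by
  refine ⟨1, one_pos, fun S _ => ?_⟩
  have hBfin : (outerBoundary S).Finite :=
    S.finite_toSet.subset (fun u hu => hu.1)
  have hrows : (S.image Prod.snd).card ≤ hBfin.toFinset.card := by
    apply Finset.card_le_card_of_injOn (rowF S)
    · intro y hy; exact hBfin.mem_toFinset.mpr (rowF_spec S y hy).1
    · intro y1 h1 y2 h2 heq
      have e1 := (rowF_spec S y1 h1).2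
      have e2 := (rowF_spec S y2 h2).2
      rw [← e1, ← e2, heq]
  have hcols : (S.image Prod.fst).card ≤ hBfin.toFinset.card := by
    apply Finset.card_le_card_of_injOn (colF S)
    · intro x hx; exact hBfin.mem_toFinset.mpr (colF_spec S x hx).1
    · intro x1 h1 x2 h2 heq
      have e1 := (colF_spec S x1 h1).2
      have e2 := (colF_spec S x2 h2).2
      rw [← e1, ← e2, heq]
  have hcard : S.card ≤ (S.image Prod.fst).card * (S.image Prod.snd).card := by
    calc S.card ≤ ((S.image Prod.fst) ×ˢ (S.image Prod.snd)).card :=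
          Finset.card_le_card (fun p hp => Finset.mem_product.mpr
            ⟨Finset.mem_image_of_mem _ hp, Finset.mem_image_of_mem _ hp⟩)
      _ = _ := Finset.card_product _ _
  have hb : (outerBoundary S).ncard = hBfin.toFinset.card :=
    Set.ncard_eq_toFinset_card _ hBfin
  have hnb : S.card ≤ (outerBoundary S).ncard * (outerBoundary S).ncard := by
    rw [hb]; exact le_trans hcard (Nat.mul_le_mul hcols hrows)
  rw [one_mul]
  have h1 : ((S.card : ℝ)) ≤ ((outerBoundary S).ncard : ℝ)^2 := by
    rw [sq]; exact_mod_cast hnb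
  calc Real.sqrt (S.card : ℝ) ≤ Real.sqrt (((outerBoundary S).ncard : ℝ)^2) :=
        Real.sqrt_le_sqrt h1
    _ = _ := Real.sqrt_sq (by positivity)
end
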